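/- Let f = Σ_{i=0}^d f_i X^{q^i} ∈ F[X] be a nonzero q-linearized polynomial. Then for every nonzero x ∈ F̄ one has ν(f(x)) ≥ V_f(ν(x)). Moreover, if in addition ν(x) ≠ ν(β) for every nonzero root β of f in F̄, then ν(f(x)) = V_f(ν(x)). -/

import Mathlib

open Polynomial
set_option linter.unusedSectionVars false

section Aux

variable {K : Type*} [Field K] (ν : K → ℚ)
  (hmul : ∀ x y : K, x ≠ 0 → y ≠ 0 → ν (x * y) = ν x + ν y)
  (hadd : ∀ x y : K, x ≠ 0 → y ≠ 0 → x + y ≠ 0 → min (ν x) (ν y) ≤ ν (x + y))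

include hmul

lemma nu_one : ν 1 = 0 := by
  have := hmul 1 1 one_ne_zero one_ne_zero
  simp at this; linarith

lemma nu_neg {a : K} (ha : a ≠ 0) : ν (-a) = ν a := by
  have h1 : ν ((-1 : K) * (-1 : K)) = ν (-1 : K) + ν (-1) := hmul _ _ (by norm_num) (by norm_num)
  simp only [neg_mul, one_mul, neg_neg] at h1
  have h0 : ν (-1 : K) = 0 := by have := nu_one ν hmul; linarith
  have h2 : ν ((-1 : K) * a) = ν (-1 : K) + ν a := hmul _ _ (by norm_num) ha
  simpa [h0] using h2

lemma nu_pow {x : K} (hx : x ≠ 0) (n : ℕ) : ν (x ^ n) = n * ν x := by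
  induction n with
  | zero => simpa using nu_one ν hmul
  | succ n ih =>
    rw [pow_succ, hmul _ _ (pow_ne_zero _ hx) hx, ih]
    push_cast; ring

include hadd

/-- If `ν a < ν b` then `a + b ≠ 0` and `ν (a+b) = ν a`. -/
lemma nu_add_eq {a b : K} (ha : a ≠ 0) (hb : b ≠ 0) (hlt : ν a < ν b) :
    a + b ≠ 0 ∧ ν (a + b) = ν a := by
  have hne : a + b ≠ 0 := by
    intro h
    have hab : a = -b := eq_neg_of_add_eq_zero_left h
    rw [hab, nu_neg ν hmul hb] at hlt; exact lt_irrefl _ hlt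
  refine ⟨hne, le_antisymm ?_ ?_⟩
  · have h1 : min (ν (a + b)) (ν (-b)) ≤ ν ((a + b) + (-b)) := by
      refine hadd _ _ hne (neg_ne_zero.mpr hb) ?_
      simpa using ha
    rw [add_neg_cancel_right, nu_neg ν hmul hb] at h1
    rcases min_le_iff.mp h1 with h | h
    · exact h
    · linarith
  · have h2 := hadd a b ha hb hne
    rw [min_eq_left hlt.le] at h2; exact h2

lemma nu_sum_ge {ι : Type*} (s : Finset ι) (t : ι → K) (hs : s.sum t ≠ 0) :
    ∃ i ∈ s, t i ≠ 0 ∧ ν (t i) ≤ ν (s.sum t) := by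
  classical
  induction s using Finset.induction with
  | empty => simp at hs
  | @insert a s' ha ih =>
    rw [Finset.sum_insert ha] at hs ⊢
    by_cases hta : t a = 0
    · rw [hta, zero_add] at hs ⊢
      obtain ⟨i, hi, h1, h2⟩ := ih hs
      exact ⟨i, Finset.mem_insert_of_mem hi, h1, h2⟩
    by_cases hs' : s'.sum t = 0
    · rw [hs', add_zero] at hs ⊢
      exact ⟨a, Finset.mem_insert_self a s', hta, le_refl _⟩
    · have h3 := hadd _ _ hta hs' hs
      rcases min_le_iff.mp h3 with h | h
      · exact ⟨a, Finset.mem_insert_self a s', hta, h⟩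
      · obtain ⟨i, hi, h1, h2⟩ := ih hs'
        exact ⟨i, Finset.mem_insert_of_mem hi, h1, h2.trans h⟩

/-- A sum with a unique term of strictly minimal valuation. -/
lemma nu_sum_eq {ι : Type*} (s : Finset ι) (t : ι → K) (a : ι) (ha : a ∈ s)
    (h0 : t a ≠ 0) (hlt : ∀ i ∈ s, i ≠ a → t i ≠ 0 → ν (t a) < ν (t i)) :
    s.sum t ≠ 0 ∧ ν (s.sum t) = ν (t a) := by
  classical
  have hsplit : s.sum t = t a + (s.erase a).sum t := by
    rw [← Finset.sum_insert (Finset.notMem_erase a s), Finset.insert_erase ha]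
  by_cases hr : (s.erase a).sum t = 0
  · rw [hsplit, hr, add_zero]; exact ⟨h0, rfl⟩
  · obtain ⟨i, hi, h1, h2⟩ := nu_sum_ge ν hmul hadd _ t hr
    have hia : i ≠ a := (Finset.mem_erase.mp hi).1
    have his : i ∈ s := (Finset.mem_erase.mp hi).2
    have hstrict : ν (t a) < ν ((s.erase a).sum t) :=
      lt_of_lt_of_le (hlt i his hia h1) h2
    have := nu_add_eq ν hmul hadd h0 hr hstrict
    rw [hsplit]; exact this

omit hadd in
lemma nu_multiset_prod (m : Multiset K) (hm : ∀ a ∈ m, a ≠ 0) :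
    ν m.prod = (m.map ν).sum := by
  induction m using Multiset.induction with
  | empty => simpa using nu_one ν hmul
  | cons a m ih =>
    have ha : a ≠ 0 := hm a (Multiset.mem_cons_self a m)
    have hm' : ∀ b ∈ m, b ≠ 0 := fun b hb => hm b (Multiset.mem_cons_of_mem hb)
    have hprod : m.prod ≠ 0 := Multiset.prod_ne_zero fun h => hm' 0 h rfl
    rw [Multiset.prod_cons, hmul _ _ ha hprod, Multiset.map_cons, Multiset.sum_cons, ih hm']

-- The valuation polygon of a polynomial over `K`: `W ν g z = min { ν gᵢ + i z : gᵢ ≠ 0 }`.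
open Classical in
noncomputable def Wp (ν : K → ℚ) (g : K[X]) (z : ℚ) : ℚ :=
  if h : g = 0 then 0
  else g.support.inf' (Polynomial.nonempty_support_iff.mpr h)
    (fun i => ν (g.coeff i) + (i : ℚ) * z)

omit hmul hadd in
lemma Wp_le {g : K[X]} (hg : g ≠ 0) {i : ℕ} (hi : i ∈ g.support) (z : ℚ) :
    Wp ν g z ≤ ν (g.coeff i) + (i : ℚ) * z := by
  rw [Wp, dif_neg hg]
  exact Finset.inf'_le _ hi

omit hmul hadd in
lemma Wp_exists {g : K[X]} (hg : g ≠ 0) (z : ℚ) :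
    ∃ i ∈ g.support, Wp ν g z = ν (g.coeff i) + (i : ℚ) * z := by
  rw [Wp, dif_neg hg]
  exact Finset.exists_mem_eq_inf' _ _

lemma Wp_mul {g h : K[X]} (hg : g ≠ 0) (hh : h ≠ 0) (z : ℚ) :
    Wp ν (g * h) z = Wp ν g z + Wp ν h z := by
  classical
  have hgh : g * h ≠ 0 := mul_ne_zero hg hh
  -- minimal indices
  set sg := g.support.filter (fun i => ν (g.coeff i) + (i : ℚ) * z = Wp ν g z) with hsg
  set sh := h.support.filter (fun i => ν (h.coeff i) + (i : ℚ) * z = Wp ν h z) with hsh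
  have hsgne : sg.Nonempty := by
    obtain ⟨i, hi, he⟩ := Wp_exists ν hg z
    exact ⟨i, Finset.mem_filter.mpr ⟨hi, he.symm⟩⟩
  have hshne : sh.Nonempty := by
    obtain ⟨i, hi, he⟩ := Wp_exists ν hh z
    exact ⟨i, Finset.mem_filter.mpr ⟨hi, he.symm⟩⟩
  set i₀ := sg.min' hsgne with hi₀
  set j₀ := sh.min' hshne with hj₀
  have hi₀m : i₀ ∈ sg := Finset.min'_mem _ _
  have hj₀m : j₀ ∈ sh := Finset.min'_mem _ _
  have hgi₀ : g.coeff i₀ ≠ 0 := Polynomial.mem_support_iff.mp (Finset.mem_filter.mp hi₀m).1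
  have hhj₀ : h.coeff j₀ ≠ 0 := Polynomial.mem_support_iff.mp (Finset.mem_filter.mp hj₀m).1
  have hgi₀e : ν (g.coeff i₀) + (i₀ : ℚ) * z = Wp ν g z := (Finset.mem_filter.mp hi₀m).2
  have hhj₀e : ν (h.coeff j₀) + (j₀ : ℚ) * z = Wp ν h z := (Finset.mem_filter.mp hj₀m).2
  -- strictness below the minimal index
  have hgstrict : ∀ i, i < i₀ → g.coeff i ≠ 0 → Wp ν g z < ν (g.coeff i) + (i : ℚ) * z := by
    intro i hi hne
    have his : i ∈ g.support := Polynomial.mem_support_iff.mpr hne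
    have hle := Wp_le ν hg his z
    rcases lt_or_eq_of_le hle with h' | h'
    · exact h'
    · exact absurd (Finset.min'_le sg i (Finset.mem_filter.mpr ⟨his, h'.symm⟩)) (not_le.mpr hi)
  have hhstrict : ∀ j, j < j₀ → h.coeff j ≠ 0 → Wp ν h z < ν (h.coeff j) + (j : ℚ) * z := by
    intro j hj hne
    have hjs : j ∈ h.support := Polynomial.mem_support_iff.mpr hne
    have hle := Wp_le ν hh hjs z
    rcases lt_or_eq_of_le hle with h' | h'
    · exact h'
    · exact absurd (Finset.min'_le sh j (Finset.mem_filter.mpr ⟨hjs, h'.symm⟩)) (not_le.mpr hj)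
  -- the coefficient of degree i₀ + j₀ has valuation exactly Wg + Wh - (i₀+j₀) z
  have hcoeff : (g * h).coeff (i₀ + j₀) =
      ∑ p ∈ Finset.HasAntidiagonal.antidiagonal (i₀ + j₀), g.coeff p.1 * h.coeff p.2 :=
    Polynomial.coeff_mul g h (i₀ + j₀)
  have hkey : (g * h).coeff (i₀ + j₀) ≠ 0 ∧
      ν ((g * h).coeff (i₀ + j₀)) = ν (g.coeff i₀ * h.coeff j₀) := by
    rw [hcoeff]
    apply nu_sum_eq ν hmul hadd _ _ (i₀, j₀)
    · exact Finset.HasAntidiagonal.mem_antidiagonal.mpr rfl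
    · exact mul_ne_zero hgi₀ hhj₀
    · rintro ⟨i, j⟩ hij hne ht
      have hijsum : i + j = i₀ + j₀ := Finset.HasAntidiagonal.mem_antidiagonal.mp hij
      have hgi : g.coeff i ≠ 0 := fun h0 => ht (by simp [h0])
      have hhj : h.coeff j ≠ 0 := fun h0 => ht (by simp [h0])
      rw [hmul _ _ hgi₀ hhj₀, hmul _ _ hgi hhj]
      have hine : i ≠ i₀ ∨ j ≠ j₀ := by
        by_contra hc
        push_neg at hc
        exact hne (Prod.ext hc.1 hc.2)
      have hgle : Wp ν g z ≤ ν (g.coeff i) + (i : ℚ) * z :=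
        Wp_le ν hg (Polynomial.mem_support_iff.mpr hgi) z
      have hhle : Wp ν h z ≤ ν (h.coeff j) + (j : ℚ) * z :=
        Wp_le ν hh (Polynomial.mem_support_iff.mpr hhj) z
      have hcast : (i : ℚ) + (j : ℚ) = (i₀ : ℚ) + (j₀ : ℚ) := by
        exact_mod_cast congrArg (Nat.cast : ℕ → ℚ) hijsum
      have hz : (i : ℚ) * z + (j : ℚ) * z = (i₀ : ℚ) * z + (j₀ : ℚ) * z := by
        rw [← add_mul, ← add_mul, hcast]
      rcases Nat.lt_or_ge i i₀ with hlt | hge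
      · have := hgstrict i hlt hgi
        linarith [this, hhle, hgi₀e, hhj₀e]
      · have hii : i₀ < i ∨ i = i₀ := by omega
        rcases hii with hlt | heq
        · have hjlt : j < j₀ := by omega
          have := hhstrict j hjlt hhj
          linarith [this, hgle, hgi₀e, hhj₀e]
        · subst heq
          have hjeq : j = j₀ := by omega
          subst hjeq
          simp at hine
  -- conclude
  apply le_antisymm
  · calc Wp ν (g * h) z ≤ ν ((g * h).coeff (i₀ + j₀)) + ((i₀ + j₀ : ℕ) : ℚ) * z :=
          Wp_le ν hgh (Polynomial.mem_support_iff.mpr hkey.1) z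
      _ = Wp ν g z + Wp ν h z := by
          rw [hkey.2, hmul _ _ hgi₀ hhj₀]
          push_cast
          linarith [hgi₀e, hhj₀e]
  · obtain ⟨k, hk, hke⟩ := Wp_exists ν hgh z
    have hk0 : (g * h).coeff k ≠ 0 := Polynomial.mem_support_iff.mp hk
    rw [Polynomial.coeff_mul] at hk0
    obtain ⟨⟨i, j⟩, hij, ht, hvle⟩ := nu_sum_ge ν hmul hadd _ _ hk0
    have hgi : g.coeff i ≠ 0 := fun h0 => ht (by simp [h0])
    have hhj : h.coeff j ≠ 0 := fun h0 => ht (by simp [h0])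
    have hijsum : i + j = k := Finset.HasAntidiagonal.mem_antidiagonal.mp hij
    have hgle := Wp_le ν hg (Polynomial.mem_support_iff.mpr hgi) z
    have hhle := Wp_le ν hh (Polynomial.mem_support_iff.mpr hhj) z
    rw [hmul _ _ hgi hhj] at hvle
    rw [hke, Polynomial.coeff_mul]
    have hcast : (i : ℚ) + (j : ℚ) = (k : ℚ) := by exact_mod_cast congrArg (Nat.cast : ℕ → ℚ) hijsum
    have hz : (i : ℚ) * z + (j : ℚ) * z = (k : ℚ) * z := by
      rw [← add_mul, hcast]
    linarith [hvle, hgle, hhle]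

omit hmul hadd in
lemma Wp_C {c : K} (hc : c ≠ 0) (z : ℚ) : Wp ν (C c) z = ν c := by
  have h0 : (C c : K[X]) ≠ 0 := by simpa using hc
  rw [Wp, dif_neg h0]
  have hsupp : (C c : K[X]).support = {0} := by
    rw [Polynomial.support_C hc]
  apply le_antisymm
  · have h1 : (0 : ℕ) ∈ (C c : K[X]).support := by rw [hsupp]; simp
    calc Finset.inf' _ _ _ ≤ ν ((C c : K[X]).coeff 0) + ((0 : ℕ) : ℚ) * z :=
          Finset.inf'_le _ h1
      _ = ν c := by simp
  · apply Finset.le_inf'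
    intro i hi
    rw [hsupp, Finset.mem_singleton] at hi
    subst hi; simp

omit hmul hadd in
lemma Wp_X_sub_C_of_ne {β : K} (hβ : β ≠ 0) (hν1 : ν (-β) = ν β) (hone : ν (1 : K) = 0)
    (z : ℚ) : Wp ν (X - C β) z = min (ν β) z := by
  have h0 : (X - C β : K[X]) ≠ 0 := Polynomial.X_sub_C_ne_zero β
  have hc0 : (X - C β : K[X]).coeff 0 = -β := by simp
  have hc1 : (X - C β : K[X]).coeff 1 = 1 := by simp
  rw [Wp, dif_neg h0]
  have hsupp : (X - C β : K[X]).support = {0, 1} := by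
    ext i
    simp only [Polynomial.mem_support_iff, Finset.mem_insert, Finset.mem_singleton]
    rcases i with _ | _ | i
    · simp [hc0, hβ]
    · simp [hc1]
    · simp [Polynomial.coeff_sub, Polynomial.coeff_X, Polynomial.coeff_C]
  apply le_antisymm
  · rcases le_total (ν β) z with h | h
    · have h1 : (0 : ℕ) ∈ (X - C β : K[X]).support := by rw [hsupp]; simp
      calc Finset.inf' _ _ _ ≤ ν ((X - C β : K[X]).coeff 0) + ((0 : ℕ) : ℚ) * z :=
            Finset.inf'_le _ h1
        _ = ν β := by rw [hc0, hν1]; simp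
        _ = min (ν β) z := (min_eq_left h).symm
    · have h1 : (1 : ℕ) ∈ (X - C β : K[X]).support := by rw [hsupp]; simp
      calc Finset.inf' _ _ _ ≤ ν ((X - C β : K[X]).coeff 1) + ((1 : ℕ) : ℚ) * z :=
            Finset.inf'_le _ h1
        _ = z := by rw [hc1, hone]; simp
        _ = min (ν β) z := (min_eq_right h).symm
  · apply Finset.le_inf'
    intro i hi
    rw [hsupp] at hi
    rcases Finset.mem_insert.mp hi with h | h
    · subst h
      rw [hc0, hν1]
      simpa using min_le_left (ν β) z
    · rw [Finset.mem_singleton] at h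
      subst h
      rw [hc1, hone]
      simpa using min_le_right (ν β) z

lemma Wp_X (hone : ν (1 : K) = 0) (z : ℚ) : Wp ν (X : K[X]) z = z := by
  have h0 : (X : K[X]) ≠ 0 := Polynomial.X_ne_zero
  rw [Wp, dif_neg h0]
  have hsupp : (X : K[X]).support = {1} := Polynomial.support_X
  apply le_antisymm
  · have h1 : (1 : ℕ) ∈ (X : K[X]).support := by rw [hsupp]; simp
    calc Finset.inf' _ _ _ ≤ ν ((X : K[X]).coeff 1) + ((1 : ℕ) : ℚ) * z :=
          Finset.inf'_le _ h1
      _ = z := by simp [hone]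
  · apply Finset.le_inf'
    intro i hi
    rw [hsupp, Finset.mem_singleton] at hi
    subst hi
    simp [hone]

lemma Wp_multiset_prod (m : Multiset K[X]) (hm : ∀ p ∈ m, p ≠ 0) (z : ℚ) :
    Wp ν m.prod z = (m.map (fun p => Wp ν p z)).sum := by
  induction m using Multiset.induction with
  | empty =>
    simp only [Multiset.prod_zero, Multiset.map_zero, Multiset.sum_zero]
    rw [Wp, dif_neg (one_ne_zero : (1 : K[X]) ≠ 0)]
    have hsupp : (1 : K[X]).support = {0} := by
      have : (1 : K[X]) = C 1 := by simp
      rw [this, Polynomial.support_C one_ne_zero]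
    apply le_antisymm
    · have h1 : (0 : ℕ) ∈ (1 : K[X]).support := by rw [hsupp]; simp
      calc Finset.inf' _ _ _ ≤ ν ((1 : K[X]).coeff 0) + ((0 : ℕ) : ℚ) * z :=
            Finset.inf'_le _ h1
        _ = 0 := by simp [nu_one ν hmul]
    · apply Finset.le_inf'
      intro i hi
      rw [hsupp, Finset.mem_singleton] at hi
      subst hi
      simp [nu_one ν hmul]
  | cons p m ih =>
    have hp : p ≠ 0 := hm p (Multiset.mem_cons_self p m)
    have hm' : ∀ q ∈ m, q ≠ 0 := fun q hq => hm q (Multiset.mem_cons_of_mem hq)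
    have hprod : m.prod ≠ 0 := Multiset.prod_ne_zero fun h => hm' 0 h rfl
    rw [Multiset.prod_cons, Wp_mul ν hmul hadd hp hprod, Multiset.map_cons, Multiset.sum_cons,
      ih hm']

lemma Wp_eval_le {g : K[X]} (hg : g ≠ 0) {x : K} (hx : x ≠ 0)
    (he : Polynomial.eval x g ≠ 0) : Wp ν g (ν x) ≤ ν (Polynomial.eval x g) := by
  classical
  have heval : Polynomial.eval x g = ∑ i ∈ g.support, g.coeff i * x ^ i := by
    rw [Polynomial.eval_eq_sum, Polynomial.sum]
  rw [heval] at he ⊢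
  obtain ⟨i, hi, ht, hle⟩ := nu_sum_ge ν hmul hadd _ _ he
  have hgi : g.coeff i ≠ 0 := Polynomial.mem_support_iff.mp hi
  have hterm : ν (g.coeff i * x ^ i) = ν (g.coeff i) + (i : ℚ) * ν x := by
    rw [hmul _ _ hgi (pow_ne_zero _ hx), nu_pow ν hmul hx]
  calc Wp ν g (ν x) ≤ ν (g.coeff i) + (i : ℚ) * ν x := Wp_le ν hg hi (ν x)
    _ = ν (g.coeff i * x ^ i) := hterm.symm
    _ ≤ ν (∑ i ∈ g.support, g.coeff i * x ^ i) := hle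

end Aux

/-- A polynomial is `q`-linearized if it is of the form `Σ fᵢ X^(qⁱ)`. -/
def IsqLin {F : Type*} [Field F] (q : ℕ) (f : Polynomial F) : Prop :=
  ∀ n, f.coeff n ≠ 0 → ∃ i : ℕ, n = q ^ i

/-- The valuation polygon `V_f(z) = min { ν(fᵢ) + qⁱ z : fᵢ ≠ 0 }` of a nonzero
`q`-linearized polynomial. -/
noncomputable def Vpoly {F : Type*} [Field F] (q : ℕ) (ν : F → ℚ) (f : Polynomial F)
    (z : ℝ) : ℝ :=
  sInf {y : ℝ | ∃ i : ℕ, f.coeff (q ^ i) ≠ 0 ∧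
    y = (ν (f.coeff (q ^ i)) : ℝ) + (q : ℝ) ^ i * z}

lemma vpoly_eq_Wp {F K : Type*} [Field F] [Field K] (φ : F →+* K) (ν : K → ℚ) (q : ℕ)
    (f : Polynomial F) (hf : IsqLin q f) (hf0 : f ≠ 0) (z₀ : ℚ) :
    Vpoly q (fun t => ν (φ t)) f (z₀ : ℝ) = ((Wp ν (f.map φ) z₀ : ℚ) : ℝ) := by
  classical
  have hφ : Function.Injective φ := φ.injective
  have hsupp : (f.map φ).support = f.support := Polynomial.support_map_of_injective f hφ
  have hfbar0 : f.map φ ≠ 0 := by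
    intro h
    apply hf0
    rwa [Polynomial.map_eq_zero_iff hφ] at h
  set T : Finset ℝ := f.support.image (fun n => ((ν (φ (f.coeff n)) + (n : ℚ) * z₀ : ℚ) : ℝ))
    with hT
  have hTne : T.Nonempty :=
    Finset.Nonempty.image (Polynomial.nonempty_support_iff.mpr hf0) _
  have hset : {y : ℝ | ∃ i : ℕ, f.coeff (q ^ i) ≠ 0 ∧
      y = ((fun t => ν (φ t)) (f.coeff (q ^ i)) : ℝ) + (q : ℝ) ^ i * (z₀ : ℝ)} = ↑T := by
    ext y
    simp only [Set.mem_setOf_eq, hT, Finset.coe_image, Set.mem_image, Finset.mem_coe,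
      Polynomial.mem_support_iff]
    constructor
    · rintro ⟨i, hne, rfl⟩
      refine ⟨q ^ i, hne, ?_⟩
      push_cast
      ring
    · rintro ⟨n, hne, rfl⟩
      obtain ⟨i, rfl⟩ := hf n hne
      refine ⟨i, hne, ?_⟩
      push_cast
      ring
  rw [Vpoly, hset, Finset.Nonempty.csInf_eq_min' hTne]
  -- now show T.min' = cast of Wp
  have hWle : ∀ y ∈ T, ((Wp ν (f.map φ) z₀ : ℚ) : ℝ) ≤ y := by
    intro y hy
    rw [hT, Finset.mem_image] at hy
    obtain ⟨n, hn, rfl⟩ := hy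
    have hn' : n ∈ (f.map φ).support := by rw [hsupp]; exact hn
    have hle := Wp_le ν hfbar0 hn' z₀
    rw [Polynomial.coeff_map] at hle
    exact_mod_cast hle
  apply le_antisymm
  · obtain ⟨n, hn, he⟩ := Wp_exists ν hfbar0 z₀
    have hn' : n ∈ f.support := by rwa [hsupp] at hn
    have hmem : ((ν (φ (f.coeff n)) + (n : ℚ) * z₀ : ℚ) : ℝ) ∈ T :=
      Finset.mem_image_of_mem _ hn'
    calc T.min' hTne ≤ ((ν (φ (f.coeff n)) + (n : ℚ) * z₀ : ℚ) : ℝ) := Finset.min'_le _ _ hmem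
      _ = ((Wp ν (f.map φ) z₀ : ℚ) : ℝ) := by
          rw [he, Polynomial.coeff_map]
  · exact Finset.le_min' _ _ _ hWle

theorem stmt6 {Fq F : Type*} [Field Fq] [Fintype Fq] [Field F] [Algebra Fq F]
    (q : ℕ) (hq : q = Fintype.card Fq)
    (ν : AlgebraicClosure F → ℚ)
    (hmul : ∀ x y : AlgebraicClosure F, x ≠ 0 → y ≠ 0 → ν (x * y) = ν x + ν y)
    (hadd : ∀ x y : AlgebraicClosure F, x ≠ 0 → y ≠ 0 → x + y ≠ 0 →
      min (ν x) (ν y) ≤ ν (x + y))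
    (f : Polynomial F) (hf : IsqLin q f) (hf0 : f ≠ 0) :
    (∀ x : AlgebraicClosure F, x ≠ 0 →
      Polynomial.aeval x f = 0 ∨
        Vpoly q (fun t => ν (algebraMap F (AlgebraicClosure F) t)) f (ν x) ≤
          (ν (Polynomial.aeval x f) : ℝ)) ∧
    (∀ x : AlgebraicClosure F, x ≠ 0 →
      (∀ β : AlgebraicClosure F, Polynomial.aeval β f = 0 → β ≠ 0 → ν x ≠ ν β) →
      Polynomial.aeval x f ≠ 0 ∧
        (ν (Polynomial.aeval x f) : ℝ) =
          Vpoly q (fun t => ν (algebraMap F (AlgebraicClosure F) t)) f (ν x)) := by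
  classical
  set φ := algebraMap F (AlgebraicClosure F) with hφdef
  set fbar := f.map φ with hfbar
  have hφinj : Function.Injective φ := φ.injective
  have hfbar0 : fbar ≠ 0 := by
    intro h
    exact hf0 ((Polynomial.map_eq_zero_iff hφinj).mp h)
  have haeval : ∀ x : AlgebraicClosure F, Polynomial.aeval x f = Polynomial.eval x fbar := by
    intro x
    rw [Polynomial.aeval_def, hfbar, Polynomial.eval_map]
  have hone : ν (1 : AlgebraicClosure F) = 0 := nu_one ν hmul
  constructor
  · -- part 1: lower bound
    intro x hx
    by_cases h0 : Polynomial.aeval x f = 0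
    · exact Or.inl h0
    · right
      rw [vpoly_eq_Wp φ ν q f hf hf0 (ν x)]
      have he : Polynomial.eval x fbar ≠ 0 := by rwa [← haeval]
      have := Wp_eval_le ν hmul hadd hfbar0 hx he
      rw [haeval]
      exact_mod_cast this
  · -- part 2: equality away from root valuations
    intro x hx hroots
    set z₀ := ν x with hz₀
    -- factorization
    have hsplit : Polynomial.Splits fbar := IsAlgClosed.splits fbar
    set c := fbar.leadingCoeff with hc
    have hc0 : c ≠ 0 := Polynomial.leadingCoeff_ne_zero.mpr hfbar0
    have hfact : fbar = Polynomial.C c * (Multiset.map (fun a => X - C a) fbar.roots).prod :=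
      hsplit.eq_prod_roots
    -- per-root facts
    have hroot_fact : ∀ β ∈ fbar.roots, (x - β ≠ 0) ∧ ν (x - β) = Wp ν (X - C β) z₀ := by
      intro β hβ
      have hβroot : Polynomial.aeval β f = 0 := by
        rw [haeval]
        exact Polynomial.isRoot_of_mem_roots hβ
      by_cases hβ0 : β = 0
      · subst hβ0
        constructor
        · simpa using hx
        · have hXC : (X - C (0 : AlgebraicClosure F)) = (X : (AlgebraicClosure F)[X]) := by simp
          rw [hXC, Wp_X ν hmul hadd hone z₀]
          simp [hz₀]
      · have hne : ν x ≠ ν β := hroots β hβroot hβ0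
        have hνneg : ν (-β) = ν β := nu_neg ν hmul hβ0
        have hWXC : Wp ν (X - C β) z₀ = min (ν β) z₀ :=
          Wp_X_sub_C_of_ne ν hβ0 hνneg hone z₀
        have hsub : x - β = x + (-β) := by ring
        rcases lt_or_gt_of_ne hne with hlt | hgt
        · have h' := nu_add_eq ν hmul hadd hx (neg_ne_zero.mpr hβ0) (by rw [hνneg]; exact hlt)
          rw [← hsub] at h'
          refine ⟨h'.1, ?_⟩
          rw [h'.2, hWXC, min_eq_right hlt.le]
        · have h' := nu_add_eq ν hmul hadd (neg_ne_zero.mpr hβ0) hx (by rw [hνneg]; exact hgt)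
          have hcomm : -β + x = x - β := by ring
          rw [hcomm] at h'
          refine ⟨h'.1, ?_⟩
          rw [h'.2, hνneg, hWXC, min_eq_left hgt.le]
    -- evaluate the product
    have heval : Polynomial.eval x fbar = c * (Multiset.map (fun β => x - β) fbar.roots).prod := by
      conv_lhs => rw [hfact]
      rw [Polynomial.eval_mul, Polynomial.eval_C, Polynomial.eval_multiset_prod,
        Multiset.map_map]
      congr 2
      apply Multiset.map_congr rfl
      intro β hβ
      simp
    have hfac_ne : ∀ a ∈ Multiset.map (fun β => x - β) fbar.roots, a ≠ 0 := by
      intro a ha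
      obtain ⟨β, hβ, rfl⟩ := Multiset.mem_map.mp ha
      exact (hroot_fact β hβ).1
    have hprod_ne : (Multiset.map (fun β => x - β) fbar.roots).prod ≠ 0 :=
      Multiset.prod_ne_zero fun h => hfac_ne 0 h rfl
    have heval_ne : Polynomial.eval x fbar ≠ 0 := by
      rw [heval]
      exact mul_ne_zero hc0 hprod_ne
    have haeval_ne : Polynomial.aeval x f ≠ 0 := by rwa [haeval]
    refine ⟨haeval_ne, ?_⟩
    -- valuation of the evaluation
    have hν_eval : ν (Polynomial.eval x fbar) =
        ν c + (Multiset.map (fun β => ν (x - β)) fbar.roots).sum := by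
      rw [heval, hmul _ _ hc0 hprod_ne, nu_multiset_prod ν hmul _ hfac_ne, Multiset.map_map]
      rfl
    -- Wp of the factorization
    have hXC_ne : ∀ p ∈ Multiset.map (fun a => X - C a) fbar.roots, p ≠ 0 := by
      intro p hp
      obtain ⟨β, hβ, rfl⟩ := Multiset.mem_map.mp hp
      exact Polynomial.X_sub_C_ne_zero β
    have hprodpoly_ne : (Multiset.map (fun a => X - C a) fbar.roots).prod ≠ 0 :=
      Multiset.prod_ne_zero fun h => hXC_ne 0 h rfl
    have hWfbar : Wp ν fbar z₀ =
        ν c + (Multiset.map (fun β => Wp ν (X - C β) z₀) fbar.roots).sum := by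
      conv_lhs => rw [hfact]
      rw [Wp_mul ν hmul hadd (by simpa using hc0) hprodpoly_ne,
        Wp_C ν hc0, Wp_multiset_prod ν hmul hadd _ hXC_ne, Multiset.map_map]
      rfl
    -- conclude
    have hsum_eq : (Multiset.map (fun β => ν (x - β)) fbar.roots).sum =
        (Multiset.map (fun β => Wp ν (X - C β) z₀) fbar.roots).sum := by
      congr 1
      apply Multiset.map_congr rfl
      intro β hβ
      exact (hroot_fact β hβ).2
    have hfinal : ν (Polynomial.aeval x f) = Wp ν fbar z₀ := by
      rw [haeval, hν_eval, hWfbar, hsum_eq]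
    rw [vpoly_eq_Wp φ ν q f hf hf0 z₀, hfinal]
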